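/- In 𝔰𝔲_{n+1} (ε = 1) or 𝔰𝔲_{1,n} (ε = −1), the centralizer of the element h_1^ε = diag(I_2^ε, 0, ..., 0), where I_2^ε = [[0,−ε],[1,0]], is 𝔥^ε = ℝh_0 + ℝh_1^ε + 𝔰𝔲_{n-1}, where h_0 = diag(i, i, (−2i/(n−1))Id_{n−1}); in particular the center of 𝔥^ε is 2-dimensional, spanned by h_0 and h_1^ε. -/

import Mathlib

/-!
STATEMENT 14: In 𝔰𝔲_{n+1} (ε = 1) or 𝔰𝔲_{1,n} (ε = −1) — the trace-free matrices X with
X*η + ηX = 0 for η = Id resp. η = diag(−1, Id_n) — the centralizer of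
h₁^ε = diag(I₂^ε, 0, …, 0), I₂^ε = [[0,−ε],[1,0]], is
𝔥^ε = ℝ h₀ + ℝ h₁^ε + 𝔰𝔲_{n−1},  h₀ = diag(i, i, (−2i/(n−1)) Id_{n−1}),
with 𝔰𝔲_{n−1} embedded in the lower-right block; in particular the center of 𝔥^ε is
2-dimensional, spanned by h₀ and h₁^ε.  (Here n ≥ 2; we write n = m + 2.)
-/

open Matrix Complex
open scoped BigOperators Matrix

noncomputable section

def etaM (m : ℕ) (e : ℝ) : Matrix (Fin (m + 3)) (Fin (m + 3)) ℂ :=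
  Matrix.diagonal (fun i => if i = 0 then (e : ℂ) else 1)

/-- 𝔰𝔲_{n+1} (e = 1) or 𝔰𝔲_{1,n} (e = −1), n = m+2. -/
def suL (m : ℕ) (e : ℝ) : Set (Matrix (Fin (m + 3)) (Fin (m + 3)) ℂ) :=
  {X | X.trace = 0 ∧ Xᴴ * etaM m e + etaM m e * X = 0}

/-- h₁^ε = diag(I₂^ε, 0, …, 0). -/
def h1M (m : ℕ) (e : ℝ) : Matrix (Fin (m + 3)) (Fin (m + 3)) ℂ :=
  fun i j => if i = 0 ∧ j = 1 then (-e : ℂ) else if i = 1 ∧ j = 0 then 1 else 0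

/-- h₀ = diag(i, i, (−2i/(n−1)) Id_{n−1}), n − 1 = m + 1. -/
def h0M (m : ℕ) : Matrix (Fin (m + 3)) (Fin (m + 3)) ℂ :=
  Matrix.diagonal (fun i => if (i : ℕ) < 2 then Complex.I
    else (-2 * Complex.I) / ((m : ℂ) + 1))

/-- The embedding of 𝔰𝔲_{n−1} into the lower-right (n−1)×(n−1) block. -/
def embSU (m : ℕ) (S : Matrix (Fin (m + 1)) (Fin (m + 1)) ℂ) :
    Matrix (Fin (m + 3)) (Fin (m + 3)) ℂ :=
  fun i j => if h : 2 ≤ (i : ℕ) ∧ 2 ≤ (j : ℕ)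
    then S ⟨(i : ℕ) - 2, by have := i.isLt; omega⟩ ⟨(j : ℕ) - 2, by have := j.isLt; omega⟩
    else 0

namespace Aux
variable {m : ℕ}

abbrev ss (k : Fin (m+1)) : Fin (m+3) := k.succ.succ

lemma fin3cases (i : Fin (m+3)) : i = 0 ∨ i = 1 ∨ ∃ k : Fin (m+1), i = ss k := by
  rcases i with ⟨v, hv⟩
  match v with
  | 0 => exact Or.inl rfl
  | 1 => exact Or.inr (Or.inl rfl)
  | (v+2) => exact Or.inr (Or.inr ⟨⟨v, by omega⟩, rfl⟩)

@[simp] lemma ss_ne_zero (k : Fin (m+1)) : (ss k : Fin (m+3)) ≠ 0 := Fin.succ_ne_zero _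
@[simp] lemma ss_ne_one (k : Fin (m+1)) : (ss k : Fin (m+3)) ≠ 1 := Fin.succ_succ_ne_one _
@[simp] lemma zero_ne_ss (k : Fin (m+1)) : (0 : Fin (m+3)) ≠ ss k := (ss_ne_zero k).symm
@[simp] lemma one_ne_ss (k : Fin (m+1)) : (1 : Fin (m+3)) ≠ ss k := (ss_ne_one k).symm
@[simp] lemma ss_val (k : Fin (m+1)) : ((ss k : Fin (m+3)) : ℕ) = (k : ℕ) + 2 := by
  simp [Fin.val_succ]
@[simp] lemma ss_inj {k l : Fin (m+1)} : (ss k : Fin (m+3)) = ss l ↔ k = l := by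
  constructor
  · intro h; exact Fin.succ_injective _ (Fin.succ_injective _ h)
  · rintro rfl; rfl

-- h1M entries
variable (e : ℝ)
@[simp] lemma h1_01 : h1M m e 0 1 = (-e : ℂ) := by simp [h1M]
@[simp] lemma h1_10 : h1M m e 1 0 = 1 := by simp [h1M]
@[simp] lemma h1_00 : h1M m e 0 0 = 0 := by simp [h1M]
@[simp] lemma h1_11 : h1M m e 1 1 = 0 := by simp [h1M]
@[simp] lemma h1_ss_left (k : Fin (m+1)) (j) : h1M m e (ss k) j = 0 := by simp [h1M]
@[simp] lemma h1_ss_right (k : Fin (m+1)) (i) : h1M m e i (ss k) = 0 := by simp [h1M]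

-- h0M entries
@[simp] lemma h0_00 : h0M m 0 0 = Complex.I := by simp [h0M]
@[simp] lemma h0_11 : h0M m 1 1 = Complex.I := by
  simp [h0M, Fin.val_one]
@[simp] lemma h0_ss (k : Fin (m+1)) : h0M m (ss k) (ss k) = (-2 * Complex.I) / ((m : ℂ) + 1) := by
  simp [h0M]
@[simp] lemma h0_offdiag {i j : Fin (m+3)} (h : i ≠ j) : h0M m i j = 0 := by
  simp [h0M, diagonal_apply_ne _ h]

-- embSU entries
@[simp] lemma emb_ss (S : Matrix (Fin (m+1)) (Fin (m+1)) ℂ) (k l : Fin (m+1)) :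
    embSU m S (ss k) (ss l) = S k l := by
  rw [embSU]
  rw [dif_pos (by simp)]
  congr 1 <;> exact Fin.ext (by simp)
@[simp] lemma emb_zero_left (S : Matrix (Fin (m+1)) (Fin (m+1)) ℂ) (j) :
    embSU m S 0 j = 0 := by rw [embSU, dif_neg]; simp
@[simp] lemma emb_one_left (S : Matrix (Fin (m+1)) (Fin (m+1)) ℂ) (j) :
    embSU m S 1 j = 0 := by rw [embSU, dif_neg]; simp [Fin.val_one]
@[simp] lemma emb_zero_right (S : Matrix (Fin (m+1)) (Fin (m+1)) ℂ) (i) :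
    embSU m S i 0 = 0 := by rw [embSU, dif_neg]; simp
@[simp] lemma emb_one_right (S : Matrix (Fin (m+1)) (Fin (m+1)) ℂ) (i) :
    embSU m S i 1 = 0 := by rw [embSU, dif_neg]; simp [Fin.val_one]

end Aux

namespace Aux
variable {m : ℕ} (e : ℝ) (S T : Matrix (Fin (m+1)) (Fin (m+1)) ℂ)

lemma hm1 : ((m : ℂ) + 1) ≠ 0 := Nat.cast_add_one_ne_zero m

@[simp] lemma not_lt_two (k : ℕ) : ¬ (2 + k < 2) := by omega
@[simp] lemma not_lt_two' (k : ℕ) : ¬ (k + 2 < 2) := by omega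

lemma trace_fin3 (X : Matrix (Fin (m+3)) (Fin (m+3)) ℂ) :
    X.trace = X 0 0 + X 1 1 + ∑ k : Fin (m+1), X (ss k) (ss k) := by
  rw [Matrix.trace, Fin.sum_univ_succ, Fin.sum_univ_succ]
  simp [Matrix.diag]
  ring

@[simp] lemma trace_h0 : (h0M m).trace = 0 := by
  rw [trace_fin3]
  simp [Finset.sum_const, Finset.card_univ]
  have h := hm1 (m := m)
  field_simp
  ring

@[simp] lemma trace_h1 : (h1M m e).trace = 0 := by
  rw [trace_fin3]; simp

@[simp] lemma trace_emb : (embSU m S).trace = S.trace := by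
  rw [trace_fin3]; simp [Matrix.trace, Matrix.diag]

@[simp] lemma emb_zero : embSU m (0 : Matrix (Fin (m+1)) (Fin (m+1)) ℂ) = 0 := by
  ext i j; rw [embSU]; split <;> simp

lemma skew_iff (X : Matrix (Fin (m+3)) (Fin (m+3)) ℂ) :
    Xᴴ * etaM m e + etaM m e * X = 0 ↔
      ∀ i j, (starRingEnd ℂ) (X j i) * (if j = 0 then (e:ℂ) else 1)
        + (if i = 0 then (e:ℂ) else 1) * X i j = 0 := by
  rw [← Matrix.ext_iff]
  constructor <;> intro h i j <;>
    simpa [etaM, mul_diagonal, diagonal_mul, conjTranspose_apply] using h i j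

lemma h0_mul_h1 : h0M m * h1M m e = h1M m e * h0M m := by
  ext i j
  rcases fin3cases i with rfl|rfl|⟨k,rfl⟩ <;> rcases fin3cases j with rfl|rfl|⟨l,rfl⟩ <;>
    simp [h0M, h1M, diagonal_mul, mul_diagonal, Fin.val_one] <;> ring

lemma emb_mul_h1 : embSU m S * h1M m e = 0 := by
  ext i j; simp [mul_apply, Fin.sum_univ_succ]

lemma h1_mul_emb : h1M m e * embSU m S = 0 := by
  ext i j; simp [mul_apply, Fin.sum_univ_succ]

lemma h0_mul_emb : h0M m * embSU m S = embSU m S * h0M m := by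
  ext i j
  rcases fin3cases i with rfl|rfl|⟨k,rfl⟩ <;> rcases fin3cases j with rfl|rfl|⟨l,rfl⟩ <;>
    simp [h0M, diagonal_mul, mul_diagonal, Fin.val_one] <;> ring

lemma emb_mul_emb : embSU m S * embSU m T = embSU m (S * T) := by
  ext i j
  rcases fin3cases i with rfl|rfl|⟨k,rfl⟩ <;> rcases fin3cases j with rfl|rfl|⟨l,rfl⟩ <;>
    simp [mul_apply, Fin.sum_univ_succ]

lemma emb_inj {S T : Matrix (Fin (m+1)) (Fin (m+1)) ℂ} (h : embSU m S = embSU m T) : S = T := by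
  ext k l
  have := congrFun (congrFun h (ss k)) (ss l)
  simpa using this

@[simp] lemma emb_conjTranspose : (embSU m S)ᴴ = embSU m Sᴴ := by
  ext i j
  rcases fin3cases i with rfl|rfl|⟨k,rfl⟩ <;> rcases fin3cases j with rfl|rfl|⟨l,rfl⟩ <;>
    simp [conjTranspose_apply]

end Aux


namespace Aux
variable {m : ℕ} {e : ℝ}

lemma skew_add {A B : Matrix (Fin (m+3)) (Fin (m+3)) ℂ}
    (hA : Aᴴ * etaM m e + etaM m e * A = 0) (hB : Bᴴ * etaM m e + etaM m e * B = 0) :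
    (A + B)ᴴ * etaM m e + etaM m e * (A + B) = 0 := by
  rw [conjTranspose_add, add_mul, mul_add,
    show Aᴴ * etaM m e + Bᴴ * etaM m e + (etaM m e * A + etaM m e * B)
      = (Aᴴ * etaM m e + etaM m e * A) + (Bᴴ * etaM m e + etaM m e * B) from by abel,
    hA, hB, add_zero]

lemma skew_smul (r : ℝ) {A : Matrix (Fin (m+3)) (Fin (m+3)) ℂ}
    (hA : Aᴴ * etaM m e + etaM m e * A = 0) :
    ((r:ℂ) • A)ᴴ * etaM m e + etaM m e * ((r:ℂ) • A) = 0 := by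
  rw [conjTranspose_smul]
  simp only [Complex.star_def, Complex.conj_ofReal]
  rw [smul_mul_assoc, mul_smul_comm, ← smul_add, hA, smul_zero]

lemma skew_h0 : (h0M m)ᴴ * etaM m e + etaM m e * h0M m = 0 := by
  rw [skew_iff]
  intro i j
  rcases fin3cases i with rfl|rfl|⟨k,rfl⟩ <;> rcases fin3cases j with rfl|rfl|⟨l,rfl⟩
  all_goals try (simp [Fin.val_one, Complex.conj_I]; try ring_nf; done)
  rcases eq_or_ne k l with rfl|h
  · simp [map_div₀, Complex.conj_I, map_ofNat]
    ring
  · simp [h0_offdiag (fun hh => h (ss_inj.mp hh)), h0_offdiag (fun hh => h (ss_inj.mp hh.symm))]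

lemma skew_h1 (he : e = 1 ∨ e = -1) : (h1M m e)ᴴ * etaM m e + etaM m e * h1M m e = 0 := by
  rw [skew_iff]
  intro i j
  rcases fin3cases i with rfl|rfl|⟨k,rfl⟩ <;> rcases fin3cases j with rfl|rfl|⟨l,rfl⟩ <;>
    rcases he with rfl|rfl <;> norm_num

lemma skew_emb {S : Matrix (Fin (m+1)) (Fin (m+1)) ℂ} (hS : Sᴴ = -S) :
    (embSU m S)ᴴ * etaM m e + etaM m e * embSU m S = 0 := by
  rw [skew_iff]
  intro i j
  rcases fin3cases i with rfl|rfl|⟨k,rfl⟩ <;> rcases fin3cases j with rfl|rfl|⟨l,rfl⟩ <;> simp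
  have := congrFun (congrFun hS k) l
  simp only [conjTranspose_apply, Matrix.neg_apply, RCLike.star_def] at this
  rw [this]
  ring

lemma mem_of_rep (he : e = 1 ∨ e = -1) (a b : ℝ) {S : Matrix (Fin (m+1)) (Fin (m+1)) ℂ}
    (hS : Sᴴ = -S) (htr : S.trace = 0) :
    ((a:ℂ) • h0M m + (b:ℂ) • h1M m e + embSU m S) ∈ suL m e ∧
      ((a:ℂ) • h0M m + (b:ℂ) • h1M m e + embSU m S) * h1M m e
        = h1M m e * ((a:ℂ) • h0M m + (b:ℂ) • h1M m e + embSU m S) := by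
  refine ⟨⟨by simp [Matrix.trace_add, Matrix.trace_smul, htr], ?_⟩, ?_⟩
  · exact skew_add (skew_add (skew_smul a skew_h0) (skew_smul b (skew_h1 he))) (skew_emb hS)
  · rw [add_mul, add_mul, mul_add, mul_add, smul_mul_assoc, smul_mul_assoc,
      mul_smul_comm, mul_smul_comm, h0_mul_h1, emb_mul_h1, h1_mul_emb]

end Aux

namespace Aux
variable {m : ℕ} {e : ℝ}

lemma rep_of_mem (he : e = 1 ∨ e = -1) (X : Matrix (Fin (m+3)) (Fin (m+3)) ℂ)
    (hX : X ∈ suL m e ∧ X * h1M m e = h1M m e * X) :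
    ∃ (a b : ℝ) (S : Matrix (Fin (m+1)) (Fin (m+1)) ℂ),
      Sᴴ = -S ∧ S.trace = 0 ∧
      X = (a : ℂ) • h0M m + (b : ℂ) • h1M m e + embSU m S := by
  obtain ⟨⟨htr, hskew⟩, hcomm⟩ := hX
  have key : ∀ i j, (X * h1M m e) i j = (h1M m e * X) i j :=
    fun i j => congrFun (congrFun hcomm i) j
  have hsk := (skew_iff e X).mp hskew
  have hene : (e : ℂ) ≠ 0 := by rcases he with rfl|rfl <;> norm_num
  -- entries vanish off the two diagonal blocks
  have e1 : ∀ k : Fin (m+1), X (ss k) 1 = 0 := by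
    intro k; have h := key (ss k) 0
    simpa [mul_apply, Fin.sum_univ_succ] using h
  have e2 : ∀ k : Fin (m+1), X (ss k) 0 = 0 := by
    intro k; have h := key (ss k) 1
    simp [mul_apply, Fin.sum_univ_succ] at h
    rcases h with h|h <;> first | exact h | (rcases he with rfl|rfl <;> norm_num at h)
  have e3 : ∀ l : Fin (m+1), X 1 (ss l) = 0 := by
    intro l; have h := key 0 (ss l)
    simp [mul_apply, Fin.sum_univ_succ] at h
    rcases h with h|h <;> first | exact h | (rcases he with rfl|rfl <;> norm_num at h)
  have e4 : ∀ l : Fin (m+1), X 0 (ss l) = 0 := by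
    intro l; have h := key 1 (ss l)
    simpa [mul_apply, Fin.sum_univ_succ] using h.symm
  have e5 : X 0 1 = -(e:ℂ) * X 1 0 := by
    have h := key 0 0
    simpa [mul_apply, Fin.sum_univ_succ] using h
  have e6 : X 1 1 = X 0 0 := by
    have h := key 1 0
    simpa [mul_apply, Fin.sum_univ_succ] using h
  have h00 := hsk 0 0
  have h01 := hsk 0 1
  simp at h00 h01
  have he2 : (e:ℂ) * (e:ℂ) = 1 := by rcases he with rfl|rfl <;> norm_num
  have s1 : (starRingEnd ℂ) (X 0 0) + X 0 0 = 0 := by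
    rcases mul_eq_zero.mp (show (e:ℂ) * ((starRingEnd ℂ) (X 0 0) + X 0 0) = 0 from by
      linear_combination h00) with h|h
    · exact absurd h hene
    · exact h
  have s2 : (starRingEnd ℂ) (X 1 0) = X 1 0 := by
    rw [e5] at h01
    linear_combination h01 + X 1 0 * he2
  have s3 : ∀ k l : Fin (m+1), (starRingEnd ℂ) (X (ss l) (ss k)) = - X (ss k) (ss l) := by
    intro k l
    have h := hsk (ss k) (ss l)
    simp at h
    linear_combination h
  have hX00 : X 0 0 = (((X 0 0).im : ℝ) : ℂ) * Complex.I := by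
    have hre : (X 0 0).re = 0 := by
      have := congrArg Complex.re s1
      simp at this
      linarith
    apply Complex.ext <;> simp [hre]
  have hX10 : X 1 0 = (((X 1 0).re : ℝ) : ℂ) := by
    have him : (X 1 0).im = 0 := by
      have := congrArg Complex.im s2
      simp at this
      linarith
    apply Complex.ext <;> simp [him]
  set a : ℝ := (X 0 0).im with ha
  set b : ℝ := (X 1 0).re with hb
  set c : ℂ := (a:ℂ) * (-2 * Complex.I / ((m:ℂ)+1)) with hc
  have hconjc : (starRingEnd ℂ) c = -c := by
    rw [hc]
    simp [map_div₀, Complex.conj_ofReal, Complex.conj_I, map_ofNat]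
    ring
  refine ⟨a, b, Matrix.of fun k l => X (ss k) (ss l) - if k = l then c else 0, ?_, ?_, ?_⟩
  · ext k l
    rcases eq_or_ne k l with rfl|h
    · simp [conjTranspose_apply, s3, hconjc]
      ring
    · simp [conjTranspose_apply, h, h.symm, s3]
  · have htr3 := trace_fin3 X
    rw [htr] at htr3
    have hsum : ∑ k : Fin (m+1), X (ss k) (ss k) = -2 * (a:ℂ) * Complex.I := by
      have : X 0 0 + X 1 1 + ∑ k : Fin (m+1), X (ss k) (ss k) = 0 := htr3.symm
      rw [e6, hX00] at this
      linear_combination this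
    have hcard : (Finset.univ : Finset (Fin (m+1))).card = m + 1 := by simp
    simp [Matrix.trace, Matrix.diag, Finset.sum_sub_distrib, hsum, Finset.sum_ite_eq,
      Finset.sum_const, hcard]
    rw [hc]
    have hm := hm1 (m := m)
    field_simp
    ring
  · ext i j
    rcases fin3cases i with rfl|rfl|⟨k,rfl⟩ <;> rcases fin3cases j with rfl|rfl|⟨l,rfl⟩ <;>
      simp [Matrix.add_apply, Matrix.smul_apply, smul_eq_mul, e1, e2, e3, e4, e5, e6,
        hX00, hX10, h0M, diagonal, Fin.val_one, Matrix.of_apply]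
    · ring
    · rcases eq_or_ne k l with rfl|h
      · simp [hc]
        try ring
      · simp [h]

end Aux

namespace Aux
variable {m : ℕ} {e : ℝ}

lemma stdBasis_conjT (p q : Fin (m+1)) (z : ℂ) :
    (single p q z)ᴴ = single q p ((starRingEnd ℂ) z) := by
  ext a b
  simp only [conjTranspose_apply, single, of_apply, RCLike.star_def]
  rw [apply_ite (starRingEnd ℂ)]
  simp [and_comm]

lemma S_eq_zero {S : Matrix (Fin (m+1)) (Fin (m+1)) ℂ} (htr : S.trace = 0)
    (hcm : ∀ T : Matrix (Fin (m+1)) (Fin (m+1)) ℂ, Tᴴ = -T → T.trace = 0 → S * T = T * S) :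
    S = 0 := by
  have hscal : S ∈ Set.range (Matrix.scalar (Fin (m+1))) := by
    apply mem_range_scalar_of_commute_single
    intro p q hpq
    set T1 : Matrix (Fin (m+1)) (Fin (m+1)) ℂ :=
      single p q 1 - single q p 1 with hT1
    set T2 : Matrix (Fin (m+1)) (Fin (m+1)) ℂ :=
      single p q Complex.I + single q p Complex.I with hT2
    have h1 := hcm T1 (by
        rw [hT1, conjTranspose_sub, stdBasis_conjT, stdBasis_conjT]
        simp)
      (by rw [hT1, Matrix.trace_sub,
            Matrix.trace_single_eq_of_ne p q 1 hpq,
            Matrix.trace_single_eq_of_ne q p 1 hpq.symm, sub_zero])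
    have h2 := hcm T2 (by
        rw [hT2, conjTranspose_add, stdBasis_conjT, stdBasis_conjT]
        simp [Complex.conj_I, ← single_add]
        ext a b
        simp [single]
        split_ifs <;> ring)
      (by rw [hT2, Matrix.trace_add,
            Matrix.trace_single_eq_of_ne p q Complex.I hpq,
            Matrix.trace_single_eq_of_ne q p Complex.I hpq.symm, add_zero])
    have key : single p q (2 * Complex.I) = Complex.I • T1 + T2 := by
      rw [hT1, hT2]
      ext a b
      simp [single, smul_ite]
      split_ifs <;> ring
    have hE : S * single p q (2 * Complex.I)
        = single p q (2 * Complex.I) * S := by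
      rw [key, mul_add, add_mul, Matrix.mul_smul, Matrix.smul_mul, h1, h2]
    have h2I : single p q (2 * Complex.I)
        = (2 * Complex.I) • single p q (1 : ℂ) := by
      rw [smul_single, smul_eq_mul, mul_one]
    rw [h2I, Matrix.mul_smul, Matrix.smul_mul] at hE
    have h2Ine : (2 * Complex.I) ≠ 0 := by simp [Complex.I_ne_zero]
    have := smul_right_injective (Matrix (Fin (m+1)) (Fin (m+1)) ℂ) h2Ine hE
    exact (Commute.symm this : Commute (single p q 1) S)
  obtain ⟨r, hr⟩ := hscal
  have htr' : ((m : ℂ) + 1) * r = 0 := by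
    rw [← hr] at htr
    simpa [Matrix.trace, Matrix.diag, Matrix.scalar, Finset.sum_const, Finset.card_univ,
      mul_comm] using htr
  have hr0 : r = 0 := by
    rcases mul_eq_zero.mp htr' with h|h
    · exact absurd h (hm1 (m := m))
    · exact h
  rw [← hr, hr0]
  simp

end Aux

namespace Aux
variable {m : ℕ} {e : ℝ}

lemma comm_h0_h1 : Commute (h0M m) (h1M m e) := h0_mul_h1 e
lemma comm_h0_emb (S : Matrix (Fin (m+1)) (Fin (m+1)) ℂ) : Commute (h0M m) (embSU m S) :=
  h0_mul_emb S
lemma comm_h1_emb (S : Matrix (Fin (m+1)) (Fin (m+1)) ℂ) : Commute (h1M m e) (embSU m S) := by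
  show _ = _
  rw [h1_mul_emb, emb_mul_h1]

lemma center_commute (a b a' b' : ℝ) (S : Matrix (Fin (m+1)) (Fin (m+1)) ℂ) :
    Commute ((a:ℂ) • h0M m + (b:ℂ) • h1M m e)
      ((a':ℂ) • h0M m + (b':ℂ) • h1M m e + embSU m S) := by
  have c00 : Commute (h0M m) (h0M m) := Commute.refl _
  have c01 : Commute (h0M m) (h1M m e) := comm_h0_h1
  have c11 : Commute (h1M m e) (h1M m e) := Commute.refl _
  have c0S : Commute (h0M m) (embSU m S) := comm_h0_emb S
  have c1S : Commute (h1M m e) (embSU m S) := comm_h1_emb S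
  exact Commute.add_left
    ((((c00.smul_right _).add_right (c01.smul_right _)).add_right c0S).smul_left _)
    ((((c01.symm.smul_right _).add_right (c11.smul_right _)).add_right c1S).smul_left _)

end Aux

theorem centralizer_of_h1 (m : ℕ) (e : ℝ) (he : e = 1 ∨ e = -1)
    (X : Matrix (Fin (m + 3)) (Fin (m + 3)) ℂ) :
    -- the centralizer of h₁^ε in 𝔤^ε is ℝh₀ + ℝh₁^ε + 𝔰𝔲_{n−1}
    ((X ∈ suL m e ∧ X * h1M m e = h1M m e * X) ↔
      ∃ (a b : ℝ) (S : Matrix (Fin (m + 1)) (Fin (m + 1)) ℂ),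
        Sᴴ = -S ∧ S.trace = 0 ∧
        X = (a : ℂ) • h0M m + (b : ℂ) • h1M m e + embSU m S) ∧
    -- the center of 𝔥^ε is spanned by h₀ and h₁^ε
    ((X ∈ suL m e ∧ X * h1M m e = h1M m e * X ∧
        ∀ Y, (Y ∈ suL m e ∧ Y * h1M m e = h1M m e * Y) → X * Y = Y * X) ↔
      ∃ a b : ℝ, X = (a : ℂ) • h0M m + (b : ℂ) • h1M m e) := by
  constructor
  · constructor
    · exact fun h => Aux.rep_of_mem he X h
    · rintro ⟨a, b, S, hS, htrS, rfl⟩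
      exact Aux.mem_of_rep he a b hS htrS
  · constructor
    · rintro ⟨hmem, hcm, hcent⟩
      obtain ⟨a, b, S, hS, htrS, rfl⟩ := Aux.rep_of_mem he _ ⟨hmem, hcm⟩
      refine ⟨a, b, ?_⟩
      have hS0 : S = 0 := by
        apply Aux.S_eq_zero htrS
        intro T hT htrT
        have hmemT := Aux.mem_of_rep (m := m) he 0 0 hT htrT
        simp only [Complex.ofReal_zero, zero_smul, zero_add] at hmemT
        have hXY := hcent (embSU m T) hmemT
        have lhs : ((a:ℂ) • h0M m + (b:ℂ) • h1M m e + embSU m S) * embSU m T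
            = (a:ℂ) • (embSU m T * h0M m) + embSU m (S * T) := by
          rw [add_mul, add_mul, Matrix.smul_mul, Matrix.smul_mul, Aux.h0_mul_emb,
            Aux.h1_mul_emb, Aux.emb_mul_emb, smul_zero, add_zero]
        have rhs : embSU m T * ((a:ℂ) • h0M m + (b:ℂ) • h1M m e + embSU m S)
            = (a:ℂ) • (embSU m T * h0M m) + embSU m (T * S) := by
          rw [mul_add, mul_add, Matrix.mul_smul, Matrix.mul_smul,
            Aux.emb_mul_h1, Aux.emb_mul_emb, smul_zero, add_zero]
        rw [lhs, rhs] at hXY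
        exact Aux.emb_inj (add_left_cancel hXY)
      rw [hS0]
      simp
    · rintro ⟨a, b, rfl⟩
      have hrep := Aux.mem_of_rep (m := m) he a b (S := 0) (by simp) (by simp)
      rw [Aux.emb_zero, add_zero] at hrep
      refine ⟨hrep.1, hrep.2, ?_⟩
      intro Y hY
      obtain ⟨a', b', S', hS', htr', rfl⟩ := Aux.rep_of_mem he Y hY
      exact Aux.center_commute a b a' b' S'
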